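/- Let w be a weight profile on n agents, let ŵ(i,j) = w_ij + w_ji be the flattened weights, and let M* be a matching on the agents maximizing Σ_{{i,j}∈M} ŵ(i,j) over all matchings. Let π be the partition whose blocks are the pairs of M* together with singletons for unmatched agents. Then the optimal fractional hedonic game social welfare satisfies opt_w ≤ 2 · SW_w(π), where SW_w(π) equals half the value of M*. -/
import Mathlib


noncomputable section

open Finset

/-- A partition of the agents `Fin n`, given by the block (coalition) of each agent. -/
structure HGPartition (n : ℕ) where
  block : Fin n → Finset (Fin n)
  mem_block : ∀ i, i ∈ block i
  block_eq : ∀ i j, j ∈ block i → block j = block i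

/-- ASHG utility of an agent with score row `wi` for a coalition `C` containing her. -/
def uA {n : ℕ} (wi : Fin n → ℝ) (C : Finset (Fin n)) : ℝ :=
  ∑ j ∈ C, wi j

/-- FHG utility of an agent with score row `wi` for a coalition `C` containing her. -/
def uF {n : ℕ} (wi : Fin n → ℝ) (C : Finset (Fin n)) : ℝ :=
  (∑ j ∈ C, wi j) / C.card

/-- Utilitarian social welfare in ASHGs. -/
def swA {n : ℕ} (w : Fin n → Fin n → ℝ) (π : HGPartition n) : ℝ :=
  ∑ i, uA (w i) (π.block i)

/-- Utilitarian social welfare in FHGs. -/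
def swF {n : ℕ} (w : Fin n → Fin n → ℝ) (π : HGPartition n) : ℝ :=
  ∑ i, uF (w i) (π.block i)

/-- A weight profile has zero scores on the diagonal. -/
def ZeroDiag {n : ℕ} (w : Fin n → Fin n → ℝ) : Prop := ∀ i, w i i = 0

/-- A matching on the agents: a set of (ordered representatives of) pairwise disjoint
unordered pairs of distinct agents. -/
def IsMatching {n : ℕ} (m : Finset (Fin n × Fin n)) : Prop :=
  (∀ p ∈ m, p.1 ≠ p.2) ∧
    ∀ p ∈ m, ∀ q ∈ m, p ≠ q →
      p.1 ≠ q.1 ∧ p.1 ≠ q.2 ∧ p.2 ≠ q.1 ∧ p.2 ≠ q.2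

/-- The value of a matching: the sum of the flattened weights `ŵ(i,j) = w i j + w j i`
over its pairs. -/
def matchValue {n : ℕ} (w : Fin n → Fin n → ℝ) (m : Finset (Fin n × Fin n)) : ℝ :=
  ∑ p ∈ m, (w p.1 p.2 + w p.2 p.1)

/-- `π` is the partition whose blocks are the pairs of the matching `m`,
together with singletons for the unmatched agents. -/
def InducedByMatching {n : ℕ} (m : Finset (Fin n × Fin n)) (π : HGPartition n) : Prop :=
  (∀ p ∈ m, π.block p.1 = {p.1, p.2}) ∧
    ∀ i : Fin n, (∀ p ∈ m, i ≠ p.1 ∧ i ≠ p.2) → π.block i = {i}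

lemma exists_coloring (k : ℕ) :
    ∃ c : Fin k → Fin k → ℕ, (∀ i j, c i j < k) ∧ (∀ i j, c i j = c j i) ∧
      ∀ i j j' : Fin k, i ≠ j → i ≠ j' → j ≠ j' → c i j ≠ c i j' := by
  rcases Nat.eq_zero_or_pos k with hk0 | hk0
  · subst hk0
    exact ⟨fun i _ => 0, fun i => i.elim0, fun i => i.elim0, fun i => i.elim0⟩
  set m : ℕ := if k % 2 = 1 then k else k - 1 with hm
  have hmodd : Odd m := by
    rcases Nat.even_or_odd k with he | ho
    · have h2 : k % 2 = 0 := Nat.even_iff.mp he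
      have : m = k - 1 := by simp [hm, h2]
      rw [this]
      exact Nat.Even.sub_odd hk0 he odd_one
    · have h2 : k % 2 = 1 := Nat.odd_iff.mp ho
      have : m = k := by simp [hm, h2]
      rw [this]; exact ho
  have hmpos : 0 < m := hmodd.pos
  have hmle : m ≤ k := by
    rcases Nat.decEq (k % 2) 1 with h | h <;> simp [hm, h] <;> omega
  have hkle : k ≤ m + 1 := by
    rcases Nat.decEq (k % 2) 1 with h | h <;> simp [hm, h] <;> omega
  -- values ≤ m
  have hvle : ∀ i : Fin k, i.val ≤ m := fun i => by have := i.isLt; omega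
  refine ⟨fun i j => if i.val < m ∧ j.val < m then (i.val + j.val) % m
    else (2 * min i.val j.val) % m, ?_, ?_, ?_⟩
  · intro i j
    dsimp only
    have h1 : (i.val + j.val) % m < m := Nat.mod_lt _ hmpos
    have h2 : (2 * min i.val j.val) % m < m := Nat.mod_lt _ hmpos
    split <;> omega
  · intro i j
    have : min i.val j.val = min j.val i.val := Nat.min_comm _ _
    by_cases h : i.val < m ∧ j.val < m
    · simp [h, and_comm, Nat.add_comm]
    · have h' : ¬ (j.val < m ∧ i.val < m) := by tauto
      simp [h, h', this]
  · intro i j j' hij hij' hjj' heq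
    dsimp only at heq
    have hco : Nat.Coprime 2 m := hmodd.coprime_two_left
    -- at most one of i j has value m, etc.
    have hne : i.val ≠ j.val := fun h => hij (Fin.ext h)
    have hne' : i.val ≠ j'.val := fun h => hij' (Fin.ext h)
    have hne'' : j.val ≠ j'.val := fun h => hjj' (Fin.ext h)
    by_cases hi : i.val < m
    · -- i finite
      by_cases hj : j.val < m
      · by_cases hj' : j'.val < m
        · -- both finite
          simp only [if_pos (And.intro hi hj), if_pos (And.intro hi hj')] at heq
          have : i.val + j.val ≡ i.val + j'.val [MOD m] := by
            unfold Nat.ModEq; simpa using heq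
          have h3 := Nat.ModEq.add_left_cancel' i.val this
          have h4 : j.val % m = j'.val % m := h3
          rw [Nat.mod_eq_of_lt hj, Nat.mod_eq_of_lt hj'] at h4
          exact hne'' h4
        · -- j' = m
          have hj'm : j'.val = m := by have := hvle j'; omega
          have hmin : min i.val j'.val = i.val := by omega
          simp only [if_pos (And.intro hi hj), if_neg (by omega : ¬ (i.val < m ∧ j'.val < m)), hmin] at heq
          have h1 : i.val + j.val ≡ 2 * i.val [MOD m] := by unfold Nat.ModEq; simpa using heq
          have h2 : i.val + j.val ≡ i.val + i.val [MOD m] := by rw [two_mul] at h1; exact h1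
          have := Nat.ModEq.add_left_cancel' i.val h2
          have : j.val % m = i.val % m := this
          rw [Nat.mod_eq_of_lt hj, Nat.mod_eq_of_lt hi] at this
          exact hne this.symm
      · -- j = m, j' finite
        have hjm : j.val = m := by have := hvle j; omega
        have hj' : j'.val < m := by have := hvle j'; omega
        have hmin : min i.val j.val = i.val := by omega
        simp only [if_neg (by omega : ¬ (i.val < m ∧ j.val < m)), if_pos (And.intro hi hj'), hmin] at heq
        have h1 : i.val + i.val ≡ i.val + j'.val [MOD m] := by
          unfold Nat.ModEq; rw [← two_mul]; simpa using heq
        have := Nat.ModEq.add_left_cancel' i.val h1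
        have : i.val % m = j'.val % m := this
        rw [Nat.mod_eq_of_lt hi, Nat.mod_eq_of_lt hj'] at this
        exact hne' this
    · -- i = m ; then j j' finite
      have him : i.val = m := by have := hvle i; omega
      have hj : j.val < m := by have := hvle j; omega
      have hj' : j'.val < m := by have := hvle j'; omega
      have hminj : min i.val j.val = j.val := by omega
      have hminj' : min i.val j'.val = j'.val := by omega
      simp only [if_neg (by omega : ¬ (i.val < m ∧ j.val < m)),
        if_neg (by omega : ¬ (i.val < m ∧ j'.val < m)), hminj, hminj'] at heq
      have h1 : 2 * j.val ≡ 2 * j'.val [MOD m] := by unfold Nat.ModEq; simpa using heq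
      have h2 := Nat.ModEq.cancel_left_of_coprime (Nat.coprime_comm.mp hco) h1
      have : j.val % m = j'.val % m := h2
      rw [Nat.mod_eq_of_lt hj, Nat.mod_eq_of_lt hj'] at this
      exact hne'' this

lemma swF_induced {n : ℕ} (w : Fin n → Fin n → ℝ) (hw : ZeroDiag w)
    (m : Finset (Fin n × Fin n)) (hm : IsMatching m)
    (π : HGPartition n) (hπ : InducedByMatching m π) :
    swF w π = matchValue w m / 2 := by
  classical
  set S : Finset (Fin n) := m.biUnion (fun p => ({p.1, p.2} : Finset (Fin n))) with hS
  have hSsub : S ⊆ univ := subset_univ S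
  have hsplit : swF w π = (∑ i ∈ S, uF (w i) (π.block i)) +
      ∑ i ∈ univ \ S, uF (w i) (π.block i) := by
    rw [swF, ← Finset.sum_sdiff hSsub, add_comm]
  have hunm : ∀ i ∈ univ \ S, uF (w i) (π.block i) = 0 := by
    intro i hi
    rw [Finset.mem_sdiff] at hi
    have hni : ∀ p ∈ m, i ≠ p.1 ∧ i ≠ p.2 := by
      intro p hp
      constructor <;> intro h <;> exact hi.2 (Finset.mem_biUnion.mpr ⟨p, hp, by
        simp [h]⟩)
    rw [hπ.2 i hni]
    simp [uF, hw i]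
  have hdisj : (m : Set (Fin n × Fin n)).PairwiseDisjoint
      (fun p : Fin n × Fin n => ({p.1, p.2} : Finset (Fin n))) := by
    intro p hp q hq hpq
    have h4 := hm.2 p hp q hq hpq
    simp only [Finset.disjoint_left, Finset.mem_insert, Finset.mem_singleton]
    rintro a (rfl | rfl) (h | h) <;> tauto
  have hmatched : ∑ i ∈ S, uF (w i) (π.block i) =
      ∑ p ∈ m, (w p.1 p.2 + w p.2 p.1) / 2 := by
    rw [hS, Finset.sum_biUnion hdisj]
    refine Finset.sum_congr rfl ?_
    intro p hp
    have hne := hm.1 p hp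
    rw [Finset.sum_pair hne]
    have hb1 : π.block p.1 = {p.1, p.2} := hπ.1 p hp
    have hb2 : π.block p.2 = {p.1, p.2} := by
      rw [π.block_eq p.1 p.2 (by rw [hb1]; simp)]; exact hb1
    have hcard : ({p.1, p.2} : Finset (Fin n)).card = 2 := Finset.card_pair hne
    rw [uF, uF, hb1, hb2, hcard, Finset.sum_pair hne, Finset.sum_pair hne,
      hw p.1, hw p.2]
    push_cast
    ring
  rw [hsplit, Finset.sum_eq_zero hunm, add_zero, hmatched, matchValue,
    Finset.sum_div]

lemma block_bound {n : ℕ} (w : Fin n → Fin n → ℝ) (hw : ZeroDiag w)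
    (C : Finset (Fin n)) (hC : C.Nonempty) :
    ∃ M : Finset (Fin n × Fin n), IsMatching M ∧ (∀ p ∈ M, p.1 ∈ C ∧ p.2 ∈ C) ∧
      (∑ i ∈ C, ∑ j ∈ C, w i j) / C.card ≤ matchValue w M := by
  classical
  set k := C.card with hk
  have hkpos : 0 < k := Finset.card_pos.mpr hC
  set e : Fin k ↪o Fin n := C.orderEmbOfFin rfl with he
  have hem : ∀ a : Fin k, e a ∈ C := fun a => C.orderEmbOfFin_mem rfl a
  have heinj : Function.Injective e := e.injective
  have hCimage : C = Finset.image (fun a => e a) univ := by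
    apply Finset.coe_injective
    rw [Finset.coe_image, Finset.coe_univ, Set.image_univ]
    exact (C.range_orderEmbOfFin rfl).symm
  set W : Fin k × Fin k → ℝ := fun p => w (e p.1) (e p.2) + w (e p.2) (e p.1) with hW
  set P : Finset (Fin k × Fin k) := univ.filter (fun p => p.1 < p.2) with hP
  -- double sum identity
  have hsum : (∑ i ∈ C, ∑ j ∈ C, w i j) = ∑ p ∈ P, W p := by
    have h1 : (∑ i ∈ C, ∑ j ∈ C, w i j) = ∑ a : Fin k, ∑ b : Fin k, w (e a) (e b) := by
      rw [hCimage, Finset.sum_image (fun a _ b _ h => heinj h)]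
      refine Finset.sum_congr rfl fun a _ => ?_
      rw [Finset.sum_image (fun a _ b _ h => heinj h)]
    rw [h1, ← Finset.sum_product']
    rw [Finset.univ_product_univ]
    have h2 := Finset.sum_filter_add_sum_filter_not (univ : Finset (Fin k × Fin k))
      (fun p => p.1 < p.2) (fun p => w (e p.1) (e p.2))
    have h3 := Finset.sum_filter_add_sum_filter_not
      ((univ : Finset (Fin k × Fin k)).filter (fun p => ¬ p.1 < p.2))
      (fun p => p.1 = p.2) (fun p => w (e p.1) (e p.2))
    have hdiag : ∑ p ∈ ((univ : Finset (Fin k × Fin k)).filter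
        (fun p => ¬ p.1 < p.2)).filter (fun p => p.1 = p.2),
        w (e p.1) (e p.2) = 0 := by
      apply Finset.sum_eq_zero
      intro p hp
      simp only [Finset.mem_filter] at hp
      rw [hp.2, hw]
    have hswap : ∑ p ∈ ((univ : Finset (Fin k × Fin k)).filter
        (fun p => ¬ p.1 < p.2)).filter (fun p => ¬ p.1 = p.2),
        w (e p.1) (e p.2) = ∑ p ∈ P, w (e p.2) (e p.1) := by
      apply Finset.sum_nbij' (fun p => Prod.swap p) (fun p => Prod.swap p)
      · intro p hp
        simp only [Finset.mem_filter, Finset.mem_univ, true_and] at hp ⊢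
        rw [hP]
        simp only [Finset.mem_filter, Finset.mem_univ, true_and, Prod.fst_swap,
          Prod.snd_swap]
        rcases hp with ⟨h4, h5⟩
        omega
      · intro p hp
        rw [hP] at hp
        simp only [Finset.mem_filter, Finset.mem_univ, true_and, Prod.fst_swap,
          Prod.snd_swap] at hp ⊢
        omega
      · intro p _; exact Prod.swap_swap p
      · intro p _; exact Prod.swap_swap p
      · intro p _; rfl
    rw [← h2, ← h3, hdiag, hswap] at *
    rw [hW]
    push_cast
    rw [Finset.sum_add_distrib]
    ring
  obtain ⟨c, hclt, hcsymm, hcprop⟩ := exists_coloring k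
  set Wp : Fin k × Fin k → ℝ := fun p => max (W p) 0 with hWp
  have hWle : ∑ p ∈ P, W p ≤ ∑ p ∈ P, Wp p :=
    Finset.sum_le_sum fun p _ => le_max_left _ _
  set v : ℕ → ℝ := fun t => ∑ p ∈ P.filter (fun p => c p.1 p.2 = t), Wp p with hv
  have hfib : ∑ t ∈ Finset.range k, v t = ∑ p ∈ P, Wp p := by
    apply Finset.sum_fiberwise_of_maps_to
    intro p _
    exact Finset.mem_range.mpr (hclt p.1 p.2)
  have havg : ∃ t0 ∈ Finset.range k, (∑ p ∈ P, Wp p) / k ≤ v t0 := by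
    apply Finset.exists_le_of_sum_le ⟨0, Finset.mem_range.mpr hkpos⟩
    rw [hfib.symm, Finset.sum_const, Finset.card_range, nsmul_eq_mul]
    rw [mul_div_cancel₀]
    exact_mod_cast hkpos.ne'
  obtain ⟨t0, _, ht0⟩ := havg
  set Q : Finset (Fin k × Fin k) :=
    P.filter (fun p => c p.1 p.2 = t0 ∧ 0 < W p) with hQ
  set M : Finset (Fin n × Fin n) := Q.image (fun p => (e p.1, e p.2)) with hM
  have hQP : ∀ p ∈ Q, p.1 < p.2 ∧ c p.1 p.2 = t0 := by
    intro p hp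
    rw [hQ, hP] at hp
    simp only [Finset.mem_filter, Finset.mem_univ, true_and] at hp
    exact ⟨hp.1, hp.2.1⟩
  -- value of M equals v t0
  have hMval : matchValue w M = v t0 := by
    rw [matchValue, hM, Finset.sum_image]
    · have hsplit := Finset.sum_filter_add_sum_filter_not
        (P.filter (fun p => c p.1 p.2 = t0)) (fun p => 0 < W p) Wp
      have hQ' : Q = (P.filter (fun p => c p.1 p.2 = t0)).filter
          (fun p => 0 < W p) := by
        ext p
        simp only [hQ, hP, Finset.mem_filter, Finset.mem_univ, true_and, and_assoc]
      have hz : ∑ p ∈ (P.filter (fun p => c p.1 p.2 = t0)).filter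
          (fun p => ¬ 0 < W p), Wp p = 0 := by
        apply Finset.sum_eq_zero
        intro p hp
        simp only [Finset.mem_filter, not_lt] at hp
        simp only [hWp]
        exact max_eq_right hp.2
      have heqW : ∑ p ∈ Q, (w (e p.1) (e p.2) + w (e p.2) (e p.1)) =
          ∑ p ∈ Q, Wp p := by
        apply Finset.sum_congr rfl
        intro p hp
        rw [hQ] at hp
        simp only [Finset.mem_filter] at hp
        have := hp.2.2
        simp only [hWp]
        rw [max_eq_left this.le]
      rw [heqW, hQ']
      simp only [hv]
      rw [← hsplit, hz, add_zero]
    · intro p hp q hq hpq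
      have h1 : e p.1 = e q.1 := congrArg Prod.fst hpq
      have h2 : e p.2 = e q.2 := congrArg Prod.snd hpq
      exact Prod.ext (heinj h1) (heinj h2)
  -- M is a matching
  have hMmem : ∀ r ∈ M, ∃ p ∈ Q, r = (e p.1, e p.2) := by
    intro r hr
    rw [hM] at hr
    obtain ⟨p, hp, hpr⟩ := Finset.mem_image.mp hr
    exact ⟨p, hp, hpr.symm⟩
  have hMmatch : IsMatching M := by
    constructor
    · intro r hr
      obtain ⟨p, hp, rfl⟩ := hMmem r hr
      exact fun h => (hQP p hp).1.ne (heinj h)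
    · intro r hr s hs hrs
      obtain ⟨p, hp, rfl⟩ := hMmem r hr
      obtain ⟨q, hq, rfl⟩ := hMmem s hs
      obtain ⟨hpord, hpc⟩ := hQP p hp
      obtain ⟨hqord, hqc⟩ := hQP q hq
      obtain ⟨p1, p2⟩ := p
      obtain ⟨q1, q2⟩ := q
      simp only at hpord hqord hpc hqc
      have hpq : (p1, p2) ≠ (q1, q2) := fun h => hrs (by rw [h])
      have hcc : c p1 p2 = c q1 q2 := by rw [hpc, hqc]
      have h11 : p1 ≠ q1 := by
        intro hE; subst hE
        have h22 : p2 ≠ q2 := fun h => hpq (by rw [h])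
        exact hcprop p1 p2 q2 hpord.ne hqord.ne h22 hcc
      have h22 : p2 ≠ q2 := by
        intro hE; subst hE
        have h11' : p1 ≠ q1 := fun h => hpq (by rw [h])
        exact hcprop p2 p1 q1 hpord.ne' hqord.ne' h11'
          (by rw [hcsymm p2 p1, hcc, hcsymm])
      have h12 : p1 ≠ q2 := by
        intro hE; subst hE
        exact hcprop p1 p2 q1 hpord.ne hqord.ne'
          (fun h => lt_asymm hqord (h ▸ hpord)) (by rw [hcc, hcsymm])
      have h21 : p2 ≠ q1 := by
        intro hE; subst hE
        exact hcprop p2 p1 q2 hpord.ne' hqord.ne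
          (fun h => absurd (h ▸ lt_trans hpord hqord) (lt_irrefl _))
          (by rw [hcsymm p2 p1, hcc])
      exact ⟨fun h => h11 (heinj h), fun h => h12 (heinj h),
        fun h => h21 (heinj h), fun h => h22 (heinj h)⟩
  refine ⟨M, hMmatch, ?_, ?_⟩
  · intro r hr
    obtain ⟨p, hp, rfl⟩ := hMmem r hr
    exact ⟨hem p.1, hem p.2⟩
  · rw [hsum, hMval]
    have hk0 : (0:ℝ) < (k:ℝ) := by exact_mod_cast hkpos
    calc (∑ p ∈ P, W p) / (k : ℝ) ≤ (∑ p ∈ P, Wp p) / k :=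
          div_le_div_of_nonneg_right hWle hk0.le
      _ ≤ v t0 := ht0

theorem max_matching_two_approx_FHG (n : ℕ) (w : Fin n → Fin n → ℝ) (hw : ZeroDiag w)
    (m : Finset (Fin n × Fin n)) (hm : IsMatching m)
    (hmax : ∀ m' : Finset (Fin n × Fin n), IsMatching m' →
      matchValue w m' ≤ matchValue w m)
    (π : HGPartition n) (hπ : InducedByMatching m π) :
    (∀ π' : HGPartition n, swF w π' ≤ 2 * swF w π) ∧
      swF w π = matchValue w m / 2 := by
  classical
  have hval : swF w π = matchValue w m / 2 := swF_induced w hw m hm π hπ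
  refine ⟨?_, hval⟩
  intro π'
  set B : Finset (Finset (Fin n)) := univ.image π'.block with hB
  have hmem_iff : ∀ C ∈ B, ∀ i : Fin n, i ∈ C ↔ π'.block i = C := by
    intro C hC i
    obtain ⟨i0, _, rfl⟩ := Finset.mem_image.mp hC
    constructor
    · intro hi; exact π'.block_eq i0 i hi
    · intro h; rw [← h]; exact π'.mem_block i
  have hne : ∀ C ∈ B, C.Nonempty := by
    intro C hC
    obtain ⟨i0, _, rfl⟩ := Finset.mem_image.mp hC
    exact ⟨i0, π'.mem_block i0⟩
  have huniq : ∀ C ∈ B, ∀ C' ∈ B, ∀ x : Fin n, x ∈ C → x ∈ C' → C = C' := by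
    intro C hC C' hC' x hx hx'
    rw [← (hmem_iff C hC x).mp hx, ← (hmem_iff C' hC' x).mp hx']
  have hgroup : swF w π' = ∑ C ∈ B, (∑ i ∈ C, ∑ j ∈ C, w i j) / C.card := by
    rw [swF, ← Finset.sum_fiberwise_of_maps_to
      (fun i _ => Finset.mem_image_of_mem π'.block (Finset.mem_univ i))
      (fun i => uF (w i) (π'.block i))]
    refine Finset.sum_congr rfl fun C hC => ?_
    have hfil : univ.filter (fun i => π'.block i = C) = C := by
      ext i
      simp only [Finset.mem_filter, Finset.mem_univ, true_and]
      exact (hmem_iff C hC i).symm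
    rw [hfil, Finset.sum_div]
    refine Finset.sum_congr rfl fun i hi => ?_
    rw [uF, (hmem_iff C hC i).mp hi]
  set F : Finset (Fin n) → Finset (Fin n × Fin n) := fun C =>
    if h : C.Nonempty then (block_bound w hw C h).choose else ∅ with hF
  have hFprop : ∀ C : Finset (Fin n), C.Nonempty → IsMatching (F C) ∧
      (∀ p ∈ F C, p.1 ∈ C ∧ p.2 ∈ C) ∧
      (∑ i ∈ C, ∑ j ∈ C, w i j) / C.card ≤ matchValue w (F C) := by
    intro C h
    simp only [hF, dif_pos h]
    exact (block_bound w hw C h).choose_spec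
  set M' : Finset (Fin n × Fin n) := B.biUnion F with hM'
  have hmemM' : ∀ p ∈ M', ∃ C ∈ B, p ∈ F C := fun p hp =>
    Finset.mem_biUnion.mp hp
  have hM'match : IsMatching M' := by
    constructor
    · intro p hp
      obtain ⟨C, hC, hpC⟩ := hmemM' p hp
      exact ((hFprop C (hne C hC)).1).1 p hpC
    · intro p hp q hq hpq
      obtain ⟨C, hC, hpC⟩ := hmemM' p hp
      obtain ⟨C', hC', hqC⟩ := hmemM' q hq
      by_cases hCC : C = C'
      · subst hCC
        exact ((hFprop C (hne C hC)).1).2 p hpC q hqC hpq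
      · have hA := ((hFprop C (hne C hC)).2).1 p hpC
        have hBq := ((hFprop C' (hne C' hC')).2).1 q hqC
        have key : ∀ a b : Fin n, a ∈ C → b ∈ C' → a ≠ b := by
          intro a b ha hb h
          exact hCC (huniq C hC C' hC' a ha (by rw [h]; exact hb))
        exact ⟨key _ _ hA.1 hBq.1, key _ _ hA.1 hBq.2,
          key _ _ hA.2 hBq.1, key _ _ hA.2 hBq.2⟩
  have hdisjF : (B : Set (Finset (Fin n))).PairwiseDisjoint F := by
    intro C hC C' hC' hCC
    rw [Finset.mem_coe] at hC hC'
    refine Finset.disjoint_left.mpr ?_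
    intro p hpC hpC'
    have hp1 := ((hFprop C (hne C hC)).2).1 p hpC
    have hq1 := ((hFprop C' (hne C' hC')).2).1 p hpC'
    exact hCC (huniq C hC C' hC' p.1 hp1.1 hq1.1)
  have hsum : matchValue w M' = ∑ C ∈ B, matchValue w (F C) := by
    rw [hM', matchValue, Finset.sum_biUnion hdisjF]
    rfl
  have h1 : swF w π' ≤ matchValue w M' := by
    rw [hgroup, hsum]
    exact Finset.sum_le_sum fun C hC => ((hFprop C (hne C hC)).2).2
  have h2 : matchValue w M' ≤ matchValue w m := hmax M' hM'match
  rw [hval]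
  linarith
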